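/- Let G be a finite group and q ≥ 2. Let G(q) be the colimit, in the category of groups, of the functor from the poset 𝒩_q(G) of subgroups of G of nilpotency class less than q (ordered by inclusion) which sends each subgroup to itself and each inclusion to the inclusion homomorphism. Let ℤ[G] denote the free abelian group on the underlying set of G, and let I_q(G) ≤ ℤ[G] be the subgroup generated by the elements [y] − [x·y] + [x] over all pairs x, y ∈ G such that the subgroup ⟨x, y⟩ has nilpotency class less than q. Then the abelianization of G(q) is isomorphic, as an abelian group, to ℤ[G]/I_q(G). -/

import Mathlib

/-- The poset (here, the index type) of subgroups of `G` of nilpotency class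
less than `q`, i.e. with `Γ^q = 1`; in Mathlib's indexing this is
`lowerCentralSeries _ (q - 1) = ⊥`. -/
abbrev NilpotentClassLtFamily (G : Type*) [Group G] (q : ℕ) : Type _ :=
  {H : Subgroup G // Subgroup.lowerCentralSeries (⊤ : Subgroup ↥H) (q - 1) = ⊥}

/-- The colimit, in the category of groups, of the inclusion functor on the
poset of subgroups of `G` of nilpotency class less than `q`, realized by its
standard construction: the quotient of the free product of all the subgroups
in the family by the relations identifying each element of a subgroup with its
image under every inclusion of the family. -/
abbrev GroupColimitOfNilpotentFamily (G : Type*) [Group G] (q : ℕ) : Type _ :=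
  Monoid.CoprodI (fun H : NilpotentClassLtFamily G q => ↥H.1) ⧸
    Subgroup.normalClosure
      {w | ∃ (A B : NilpotentClassLtFamily G q) (h : A.1 ≤ B.1) (x : ↥A.1),
        w = Monoid.CoprodI.of (M := fun H : NilpotentClassLtFamily G q => ↥H.1) (i := A) x *
          (Monoid.CoprodI.of (M := fun H : NilpotentClassLtFamily G q => ↥H.1) (i := B)
            (Subgroup.inclusion h x))⁻¹}

/-- The subgroup `I_q(G)` of `ℤ[G]` generated by the elements
`[y] − [x·y] + [x]` over all pairs `x, y` generating a subgroup of nilpotency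
class less than `q`. -/
noncomputable def augmentationIdealOfNilpotentPairs (G : Type*) [Group G] (q : ℕ) :
    AddSubgroup (G →₀ ℤ) :=
  AddSubgroup.closure
    {f | ∃ x y : G,
      Subgroup.lowerCentralSeries (⊤ : Subgroup ↥(Subgroup.closure ({x, y} : Set G))) (q - 1) = ⊥ ∧
      f = Finsupp.single y 1 - Finsupp.single (x * y) 1 + Finsupp.single x 1}

section Helpers

variable {G : Type*} [Group G] {q : ℕ}

lemma lcs_bot_of_le {K H : Subgroup G} (hKH : K ≤ H) {n : ℕ}
    (hH : Subgroup.lowerCentralSeries (⊤ : Subgroup ↥H) n = ⊥) : Subgroup.lowerCentralSeries (⊤ : Subgroup ↥K) n = ⊥ := by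
  have hmap : Subgroup.map (Subgroup.inclusion hKH) (Subgroup.lowerCentralSeries (⊤ : Subgroup ↥K) n) = ⊥ :=
    le_bot_iff.mp (hH ▸ Subgroup.lowerCentralSeries.map (Subgroup.inclusion hKH) n)
  exact (Subgroup.map_eq_bot_iff_of_injective (H := Subgroup.lowerCentralSeries (⊤ : Subgroup ↥K) n) (Subgroup.inclusion_injective hKH)).mp hmap

lemma lcs_comm_bot (A : Type*) [CommGroup A] {n : ℕ} (hn : 1 ≤ n) :
    Subgroup.lowerCentralSeries (⊤ : Subgroup A) n = ⊥ := by
  have h1 : Subgroup.lowerCentralSeries (⊤ : Subgroup A) 1 = ⊥ := by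
    rw [Subgroup.top_lowerCentralSeries_one, commutator_def, Subgroup.commutator_eq_bot_iff_le_centralizer]
    intro g _
    rw [Subgroup.mem_centralizer_iff]
    intro h _
    exact mul_comm h g
  exact le_bot_iff.mp (h1 ▸ Subgroup.lowerCentralSeries_antitone _ hn)

lemma lcs_closure_singleton (hq : 2 ≤ q) (g : G) :
    Subgroup.lowerCentralSeries (⊤ : Subgroup ↥(Subgroup.closure ({g} : Set G))) (q - 1) = ⊥ := by
  rw [← Subgroup.zpowers_eq_closure]
  exact (open scoped IsMulCommutative in lcs_comm_bot ↥(Subgroup.zpowers g) (n := q - 1) (by omega))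

end Helpers

section Main

open Monoid Subgroup

variable (G : Type*) [Group G] (q : ℕ)

-- abbreviations
local notation "Iq" => augmentationIdealOfNilpotentPairs G q
local notation "Qt" => ((G →₀ ℤ) ⧸ augmentationIdealOfNilpotentPairs G q)

variable {G q}

lemma one_mem_Iq (hq : 2 ≤ q) : (Finsupp.single (1 : G) 1 : G →₀ ℤ) ∈ Iq := by
  apply AddSubgroup.subset_closure
  refine ⟨1, 1, ?_, ?_⟩
  · have : ({(1 : G), 1} : Set G) = {1} := by simp
    rw [this]
    exact lcs_closure_singleton hq 1
  · rw [mul_one]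
    abel

lemma gen_mem_Iq (H : NilpotentClassLtFamily G q) {x y : G} (hx : x ∈ H.1) (hy : y ∈ H.1) :
    (Finsupp.single y 1 - Finsupp.single (x * y) 1 + Finsupp.single x 1 : G →₀ ℤ) ∈ Iq := by
  apply AddSubgroup.subset_closure
  refine ⟨x, y, ?_, rfl⟩
  exact lcs_bot_of_le (Subgroup.closure_le H.1 |>.mpr (by
    intro g hg
    rcases hg with rfl | hg
    · exact hx
    · rcases hg with rfl; exact hy)) H.2

/-- The homomorphism from each subgroup in the family to `ℤ[G]/I_q`. -/
noncomputable def phiH (hq : 2 ≤ q) (H : NilpotentClassLtFamily G q) :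
    ↥H.1 →* Multiplicative Qt where
  toFun h := Multiplicative.ofAdd
    (QuotientAddGroup.mk (Finsupp.single (h : G) 1 - Finsupp.single (1 : G) 1))
  map_one' := by
    simp only [OneMemClass.coe_one, sub_self]
    rfl
  map_mul' a b := by
    apply congrArg Multiplicative.ofAdd
    show QuotientAddGroup.mk _ = QuotientAddGroup.mk (_ + _)
    rw [QuotientAddGroup.eq]
    have h1 := gen_mem_Iq H a.2 b.2
    have h2 := one_mem_Iq (G := G) hq
    have hmem := AddSubgroup.sub_mem _ h1 h2
    convert hmem using 1
    push_cast
    abel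

/-- The induced homomorphism on the free product. -/
noncomputable def phiFree (hq : 2 ≤ q) :
    Monoid.CoprodI (fun H : NilpotentClassLtFamily G q => ↥H.1) →* Multiplicative Qt :=
  Monoid.CoprodI.lift (phiH hq)

lemma phiFree_ker (hq : 2 ≤ q) :
    Subgroup.normalClosure
      {w | ∃ (A B : NilpotentClassLtFamily G q) (h : A.1 ≤ B.1) (x : ↥A.1),
        w = Monoid.CoprodI.of (M := fun H : NilpotentClassLtFamily G q => ↥H.1) (i := A) x *
          (Monoid.CoprodI.of (M := fun H : NilpotentClassLtFamily G q => ↥H.1) (i := B)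
            (Subgroup.inclusion h x))⁻¹} ≤ (phiFree (G := G) hq).ker := by
  apply Subgroup.normalClosure_le_normal
  rintro w ⟨A, B, h, x, rfl⟩
  rw [SetLike.mem_coe, MonoidHom.mem_ker, map_mul, map_inv]
  simp only [phiFree, Monoid.CoprodI.lift_of]
  have : ((Subgroup.inclusion h x : ↥B.1) : G) = (x : G) := rfl
  simp [phiH, this]

/-- The monoid hom from the colimit. -/
noncomputable def phiColim (hq : 2 ≤ q) :
    GroupColimitOfNilpotentFamily G q →* Multiplicative Qt :=
  QuotientGroup.lift _ (phiFree hq) (phiFree_ker hq)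

/-- The hom on the abelianization. -/
noncomputable def phiAb (hq : 2 ≤ q) :
    Abelianization (GroupColimitOfNilpotentFamily G q) →* Multiplicative Qt :=
  Abelianization.lift (phiColim hq)

/-- Additive version. -/
noncomputable def phi (hq : 2 ≤ q) :
    Additive (Abelianization (GroupColimitOfNilpotentFamily G q)) →+ Qt :=
  AddMonoidHom.mk' (fun a => Multiplicative.toAdd (phiAb hq (Additive.toMul a)))
    (fun a b => by
      show Multiplicative.toAdd ((phiAb hq) (Additive.toMul a * Additive.toMul b)) = _
      rw [map_mul]
      rfl)

end Main

section Psi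

set_option maxHeartbeats 1000000
set_option synthInstance.maxHeartbeats 1000000

open Monoid Subgroup

variable {G : Type*} [Group G] {q : ℕ}

lemma mk_of_eq (A B : NilpotentClassLtFamily G q) (h : A.1 ≤ B.1) (x : ↥A.1) :
    (QuotientGroup.mk (Monoid.CoprodI.of (M := fun H : NilpotentClassLtFamily G q => ↥H.1)
        (i := A) x) : GroupColimitOfNilpotentFamily G q) =
      QuotientGroup.mk (Monoid.CoprodI.of (M := fun H : NilpotentClassLtFamily G q => ↥H.1)
        (i := B) (Subgroup.inclusion h x)) := by
  rw [QuotientGroup.eq]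
  set a := Monoid.CoprodI.of (M := fun H : NilpotentClassLtFamily G q => ↥H.1) (i := A) x
  set b := Monoid.CoprodI.of (M := fun H : NilpotentClassLtFamily G q => ↥H.1) (i := B)
    (Subgroup.inclusion h x)
  set N := Subgroup.normalClosure
      {w | ∃ (A B : NilpotentClassLtFamily G q) (h : A.1 ≤ B.1) (x : ↥A.1),
        w = Monoid.CoprodI.of (M := fun H : NilpotentClassLtFamily G q => ↥H.1) (i := A) x *
          (Monoid.CoprodI.of (M := fun H : NilpotentClassLtFamily G q => ↥H.1) (i := B)
            (Subgroup.inclusion h x))⁻¹}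
  have h1 : a * b⁻¹ ∈ N := Subgroup.subset_normalClosure ⟨A, B, h, x, rfl⟩
  have h2 : a⁻¹ * (a * b⁻¹) * a⁻¹⁻¹ ∈ N :=
    (Subgroup.normalClosure_normal).conj_mem _ h1 a⁻¹
  have h3 : b⁻¹ * a ∈ N := by
    convert h2 using 1
    group
  have h4 := N.inv_mem h3
  rwa [mul_inv_rev, inv_inv] at h4

/-- The canonical image of `g : G` in the abelianized colimit. -/
noncomputable def elt (hq : 2 ≤ q) (g : G) :
    Additive (Abelianization (GroupColimitOfNilpotentFamily G q)) :=
  Additive.ofMul (Abelianization.of (QuotientGroup.mk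
    (Monoid.CoprodI.of (M := fun H : NilpotentClassLtFamily G q => ↥H.1)
      (i := ⟨Subgroup.closure ({g} : Set G), lcs_closure_singleton hq g⟩)
      ⟨g, Subgroup.mem_closure_singleton_self g⟩)))

lemma elt_eq (hq : 2 ≤ q) (H : NilpotentClassLtFamily G q) {g : G} (hg : g ∈ H.1) :
    elt hq g = Additive.ofMul (Abelianization.of (QuotientGroup.mk
      (Monoid.CoprodI.of (M := fun H : NilpotentClassLtFamily G q => ↥H.1)
        (i := H) ⟨g, hg⟩))) := by
  unfold elt
  have hle : Subgroup.closure ({g} : Set G) ≤ H.1 :=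
    (Subgroup.closure_le H.1).mpr (Set.singleton_subset_iff.mpr hg)
  have := mk_of_eq ⟨Subgroup.closure ({g} : Set G), lcs_closure_singleton hq g⟩ H hle
    ⟨g, Subgroup.mem_closure_singleton_self g⟩
  rw [this]
  rfl

lemma elt_one (hq : 2 ≤ q) : elt (G := G) hq 1 = 0 := by
  unfold elt
  have : (⟨(1 : G), Subgroup.mem_closure_singleton_self (1 : G)⟩ :
      ↥(Subgroup.closure ({(1 : G)} : Set G))) = 1 := rfl
  rw [this, map_one]
  show Additive.ofMul (Abelianization.of (1 : GroupColimitOfNilpotentFamily G q)) = 0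
  rw [map_one]
  rfl

/-- The additive hom `ℤ[G] →+ Additive (Abelianization G(q))`. -/
noncomputable def psi (hq : 2 ≤ q) :
    (G →₀ ℤ) →+ Additive (Abelianization (GroupColimitOfNilpotentFamily G q)) :=
  Finsupp.liftAddHom (fun g => zmultiplesHom _ (elt hq g))

lemma psi_single (hq : 2 ≤ q) (g : G) : psi hq (Finsupp.single g 1) = elt hq g := by
  simp [psi]

lemma psi_ker (hq : 2 ≤ q) :
    augmentationIdealOfNilpotentPairs G q ≤ (psi (G := G) hq).ker := by
  rw [augmentationIdealOfNilpotentPairs, AddSubgroup.closure_le]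
  rintro f ⟨x, y, hxy, rfl⟩
  rw [SetLike.mem_coe, AddMonoidHom.mem_ker, map_add, map_sub,
    psi_single, psi_single, psi_single]
  set K : NilpotentClassLtFamily G q := ⟨Subgroup.closure ({x, y} : Set G), hxy⟩
  have hxK : x ∈ K.1 := Subgroup.subset_closure (by simp)
  have hyK : y ∈ K.1 := Subgroup.subset_closure (by simp)
  have hxyK : x * y ∈ K.1 := K.1.mul_mem hxK hyK
  rw [elt_eq hq K hxK, elt_eq hq K hyK, elt_eq hq K hxyK]
  have : (⟨x * y, hxyK⟩ : ↥K.1) = ⟨x, hxK⟩ * ⟨y, hyK⟩ := rfl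
  rw [this, map_mul, QuotientGroup.mk_mul, map_mul]
  set u := Additive.ofMul (Abelianization.of (QuotientGroup.mk (Monoid.CoprodI.of
    (M := fun H : NilpotentClassLtFamily G q => ↥H.1) (i := K) ⟨x, hxK⟩) :
      GroupColimitOfNilpotentFamily G q))
  set v := Additive.ofMul (Abelianization.of (QuotientGroup.mk (Monoid.CoprodI.of
    (M := fun H : NilpotentClassLtFamily G q => ↥H.1) (i := K) ⟨y, hyK⟩) :
      GroupColimitOfNilpotentFamily G q))
  show v - (u + v) + u = 0
  abel

/-- The descended hom `ℤ[G]/I_q →+ Additive (Abelianization G(q))`. -/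
noncomputable def psiBar (hq : 2 ≤ q) :
    ((G →₀ ℤ) ⧸ augmentationIdealOfNilpotentPairs G q) →+
      Additive (Abelianization (GroupColimitOfNilpotentFamily G q)) :=
  QuotientAddGroup.lift _ (psi hq) (psi_ker hq)

end Psi

section Final

set_option maxHeartbeats 1000000
set_option synthInstance.maxHeartbeats 1000000

open Monoid Subgroup

variable {G : Type*} [Group G] {q : ℕ}

lemma phi_elt (hq : 2 ≤ q) (g : G) :
    phi hq (elt hq g) =
      QuotientAddGroup.mk (Finsupp.single g 1 - Finsupp.single (1 : G) 1) := by
  simp only [phi, elt, AddMonoidHom.mk'_apply, toMul_ofMul, phiAb,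
    Abelianization.lift_apply_of, phiColim, QuotientGroup.lift_mk', phiFree,
    Monoid.CoprodI.lift_of]
  rfl

lemma comp1 (hq : 2 ≤ q) : (phi (G := G) hq).comp (psiBar hq) = AddMonoidHom.id _ := by
  refine QuotientAddGroup.addMonoidHom_ext _ ?_
  refine Finsupp.addHom_ext' fun g => ?_
  refine AddMonoidHom.ext_int ?_
  show phi hq (psiBar hq (QuotientAddGroup.mk (Finsupp.single g 1))) =
    QuotientAddGroup.mk (Finsupp.single g 1)
  rw [psiBar, QuotientAddGroup.lift_mk', psi_single, phi_elt hq]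
  rw [QuotientAddGroup.eq]
  have : -((Finsupp.single g 1 : G →₀ ℤ) - Finsupp.single (1 : G) 1) + Finsupp.single g 1
      = (Finsupp.single (1 : G) 1 : G →₀ ℤ) := by abel
  rw [this]
  exact one_mem_Iq hq

lemma comp2 (hq : 2 ≤ q) (a : Additive (Abelianization (GroupColimitOfNilpotentFamily G q))) :
    psiBar hq (phi hq a) = a := by
  have key : ∀ w : Monoid.CoprodI (fun H : NilpotentClassLtFamily G q => ↥H.1),
      psiBar hq (phi hq (Additive.ofMul (Abelianization.of (QuotientGroup.mk w)))) =
        Additive.ofMul (Abelianization.of (QuotientGroup.mk w)) := by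
    intro w
    induction w using Monoid.CoprodI.induction_on with
    | one =>
      rw [QuotientGroup.mk_one, map_one]
      show psiBar hq (phi hq 0) = 0
      rw [map_zero, map_zero]
    | of i x =>
      have hphi : phi hq (Additive.ofMul (Abelianization.of
          (QuotientGroup.mk (Monoid.CoprodI.of
            (M := fun H : NilpotentClassLtFamily G q => ↥H.1) (i := i) x)))) =
          QuotientAddGroup.mk (Finsupp.single (x : G) 1 - Finsupp.single (1 : G) 1) := by
        simp only [phi, AddMonoidHom.mk'_apply, toMul_ofMul, phiAb,
          Abelianization.lift_apply_of, phiColim, QuotientGroup.lift_mk', phiFree,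
          Monoid.CoprodI.lift_of]
        rfl
      rw [hphi, psiBar, QuotientAddGroup.lift_mk', map_sub, psi_single, psi_single,
        elt_one hq, sub_zero, elt_eq hq i x.2]
    | mul w1 w2 ih1 ih2 =>
      rw [QuotientGroup.mk_mul, map_mul, ofMul_mul, map_add, map_add, ih1, ih2]
  obtain ⟨b, rfl⟩ : ∃ b, Additive.ofMul b = a := ⟨Additive.toMul a, rfl⟩
  induction b using QuotientGroup.induction_on with
  | H z =>
    induction z using QuotientGroup.induction_on with
    | H w => exact key w

end Final


/-- For a finite group `G` and `q ≥ 2`, the abelianization of the colimit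
`G(q)` of the family of subgroups of nilpotency class less than `q` is
isomorphic as an abelian group to `ℤ[G]/I_q(G)`. -/
theorem abelianization_of_colimit_iso_ZG_mod_Iq
    (G : Type*) [Group G] [Finite G] (q : ℕ) (hq : 2 ≤ q) :
    Nonempty
      (Additive (Abelianization (GroupColimitOfNilpotentFamily G q)) ≃+
        (G →₀ ℤ) ⧸ augmentationIdealOfNilpotentPairs G q) :=
  ⟨AddMonoidHom.toAddEquiv (phi hq) (psiBar hq)
    (AddMonoidHom.ext (comp2 hq)) (comp1 hq)⟩
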